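/- Let E be a Riesz space and let p, q : ℕ → ℕ satisfy the deferred property. If x_n →^{D_{st_o}}_{p,q} x, y_n →^{D_{st_o}}_{p,q} y, and x_n ≥ y_n for every n ∈ ℕ, then x ≥ y. -/

import Mathlib

open Filter Topology

variable {E : Type*} [AddCommGroup E] [Lattice E]
  [CovariantClass E E (· + ·) (· ≤ ·)] [Module ℝ E] [PosSMulMono ℝ E]

/-- `p` and `q` satisfy the deferred property: `p n < q n` for all `n` and `q n → ∞`. -/
def DeferredProperty (p q : ℕ → ℕ) : Prop :=
  (∀ n, p n < q n) ∧ Tendsto q atTop atTop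

open Classical in
/-- The ratio `|{k ∈ K : p n < k ≤ q n}| / (q n - p n)`. -/
noncomputable def deferredRatio (p q : ℕ → ℕ) (K : Set ℕ) (n : ℕ) : ℝ :=
  (((Finset.Ioc (p n) (q n)).filter (fun k => k ∈ K)).card : ℝ) / ((q n : ℝ) - (p n : ℝ))

/-- The deferred density of `K ⊆ ℕ` is `a`. -/
def DeferredDensity (p q : ℕ → ℕ) (K : Set ℕ) (a : ℝ) : Prop :=
  Tendsto (deferredRatio p q K) atTop (nhds a)

/-- `z` is deferred statistical order decreasing to `0`: there is an (infinite) set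
`K = {k₁ < k₂ < ⋯}` of deferred density one along which `z` is decreasing with infimum `0`. -/
def DStatDecreasing (p q : ℕ → ℕ) (z : ℕ → E) : Prop :=
  ∃ K : Set ℕ, K.Infinite ∧ DeferredDensity p q K 1 ∧
    (∀ i ∈ K, ∀ j ∈ K, i ≤ j → z j ≤ z i) ∧ IsGLB (z '' K) 0

/-- `x` is deferred statistical order convergent to `l`. -/
def DStatOrderConv (p q : ℕ → ℕ) (x : ℕ → E) (l : E) : Prop :=
  ∃ z : ℕ → E, DStatDecreasing p q z ∧
    ∃ K : Set ℕ, K.Infinite ∧ DeferredDensity p q K 1 ∧ ∀ k ∈ K, |x k - l| ≤ z k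

lemma card_filter_inter (s : Finset ℕ) (A B : Set ℕ)
    (iA : DecidablePred (fun k => k ∈ A)) (iB : DecidablePred (fun k => k ∈ B))
    (iAB : DecidablePred (fun k => k ∈ A ∩ B)) :
    (@Finset.filter _ _ iA s).card + (@Finset.filter _ _ iB s).card
      ≤ s.card + (@Finset.filter _ _ iAB s).card := by
  classical
  rw [Finset.filter_congr_decidable, Finset.filter_congr_decidable,
    Finset.filter_congr_decidable]
  have h1 : (s.filter (fun k => k ∈ A)) ∪ (s.filter (fun k => k ∈ B)) ⊆ s := by
    intro k hk
    rcases Finset.mem_union.mp hk with h | h <;> exact Finset.mem_of_mem_filter _ h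
  have h2 : (s.filter (fun k => k ∈ A)) ∩ (s.filter (fun k => k ∈ B))
      = s.filter (fun k => k ∈ A ∩ B) := by
    ext k; simp only [Finset.mem_inter, Finset.mem_filter, Set.mem_inter_iff]; tauto
  calc (s.filter (fun k => k ∈ A)).card + (s.filter (fun k => k ∈ B)).card
      = ((s.filter (fun k => k ∈ A)) ∪ (s.filter (fun k => k ∈ B))).card
        + ((s.filter (fun k => k ∈ A)) ∩ (s.filter (fun k => k ∈ B))).card :=
        (Finset.card_union_add_card_inter _ _).symm
    _ ≤ s.card + (s.filter (fun k => k ∈ A ∩ B)).card := by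
        rw [h2]; exact add_le_add_left (Finset.card_le_card h1) _

lemma card_filter_inter_le (s : Finset ℕ) (A B : Set ℕ)
    (iAB : DecidablePred (fun k => k ∈ A ∩ B)) (iA : DecidablePred (fun k => k ∈ A)) :
    (@Finset.filter _ _ iAB s).card ≤ (@Finset.filter _ _ iA s).card :=
  Finset.card_le_card (by
    intro k hk
    rw [Finset.mem_filter] at *
    exact ⟨hk.1, hk.2.1⟩)

lemma density_inter (p q : ℕ → ℕ) (hpq : DeferredProperty p q) {A B : Set ℕ}
    (hA : DeferredDensity p q A 1) (hB : DeferredDensity p q B 1) :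
    DeferredDensity p q (A ∩ B) 1 := by
  have hd : ∀ n, (0:ℝ) < (q n : ℝ) - (p n : ℝ) := by
    intro n
    have : (p n : ℝ) < (q n : ℝ) := by exact_mod_cast hpq.1 n
    linarith
  have hlower : ∀ n, deferredRatio p q A n + deferredRatio p q B n - 1
      ≤ deferredRatio p q (A ∩ B) n := by
    intro n
    have hscard : ((Finset.Ioc (p n) (q n)).card : ℝ) = (q n : ℝ) - (p n : ℝ) := by
      rw [Nat.card_Ioc]
      exact_mod_cast Nat.cast_sub (le_of_lt (hpq.1 n))
    have hcardR := card_filter_inter (Finset.Ioc (p n) (q n)) A B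
      (fun k => Classical.propDecidable _) (fun k => Classical.propDecidable _)
      (fun k => Classical.propDecidable _)
    have hcardR' := (Nat.cast_le (α := ℝ)).mpr hcardR
    push_cast at hcardR'
    simp only [deferredRatio]
    rw [← add_div, sub_le_iff_le_add, div_add' _ _ _ (ne_of_gt (hd n)),
      div_le_div_iff_of_pos_right (hd n), one_mul, ← hscard]
    linarith
  have hupper : ∀ n, deferredRatio p q (A ∩ B) n ≤ deferredRatio p q A n := by
    intro n
    simp only [deferredRatio]
    rw [div_le_div_iff_of_pos_right (hd n)]
    exact_mod_cast card_filter_inter_le (Finset.Ioc (p n) (q n)) A B _ _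
  have h1 : Tendsto (fun n => deferredRatio p q A n + deferredRatio p q B n - 1)
      atTop (nhds 1) := by
    have := (hA.add hB).sub (tendsto_const_nhds (x := (1:ℝ)))
    simpa using this
  exact tendsto_of_tendsto_of_tendsto_of_le_of_le h1 hA hlower hupper

lemma density_one_infinite (p q : ℕ → ℕ) (hpq : DeferredProperty p q) {S : Set ℕ}
    (hS : DeferredDensity p q S 1) : S.Infinite := by
  classical
  by_contra hfin
  rw [Set.not_infinite] at hfin
  obtain ⟨N, hN⟩ := hfin.bddAbove
  have hd : ∀ n, (0:ℝ) < (q n : ℝ) - (p n : ℝ) := by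
    intro n
    have : (p n : ℝ) < (q n : ℝ) := by exact_mod_cast hpq.1 n
    linarith
  -- eventually q n > N
  have hev : ∀ᶠ n in atTop, deferredRatio p q S n ≤ (N : ℝ) / ((q n : ℝ) - N) := by
    filter_upwards [hpq.2.eventually_gt_atTop N] with n hn
    have hqN : (0:ℝ) < (q n : ℝ) - N := by
      have : (N : ℝ) < (q n : ℝ) := by exact_mod_cast hn
      linarith
    by_cases hc : N ≤ p n
    · have h0 : ((Finset.Ioc (p n) (q n)).filter (fun k => k ∈ S)).card = 0 := by
        rw [Finset.card_eq_zero, Finset.filter_eq_empty_iff]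
        intro k hk hkS
        have := hN hkS
        have := (Finset.mem_Ioc.mp hk).1
        omega
      simp only [deferredRatio, h0, Nat.cast_zero, zero_div]
      positivity
    · push_neg at hc
      have hcard : ((Finset.Ioc (p n) (q n)).filter (fun k => k ∈ S)).card ≤ N := by
        have hsub : (Finset.Ioc (p n) (q n)).filter (fun k => k ∈ S) ⊆ Finset.Ioc (p n) N := by
          intro k hk
          rw [Finset.mem_filter, Finset.mem_Ioc] at hk
          exact Finset.mem_Ioc.mpr ⟨hk.1.1, hN hk.2⟩
        calc ((Finset.Ioc (p n) (q n)).filter (fun k => k ∈ S)).card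
            ≤ (Finset.Ioc (p n) N).card := Finset.card_le_card hsub
          _ = N - p n := Nat.card_Ioc _ _
          _ ≤ N := Nat.sub_le _ _
      have h1 : deferredRatio p q S n ≤ (N : ℝ) / ((q n : ℝ) - (p n : ℝ)) := by
        simp only [deferredRatio]
        rw [div_le_div_iff_of_pos_right (hd n)]
        exact_mod_cast hcard
      refine h1.trans (div_le_div_of_nonneg_left (by positivity) hqN ?_)
      have : (p n : ℝ) ≤ (N : ℝ) := by exact_mod_cast hc.le
      linarith
  have hto0 : Tendsto (fun n => (N : ℝ) / ((q n : ℝ) - N)) atTop (nhds 0) := by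
    apply Tendsto.div_atTop tendsto_const_nhds
    apply tendsto_atTop_add_const_right
    exact tendsto_natCast_atTop_atTop.comp hpq.2
  have := le_of_tendsto_of_tendsto hS hto0 hev
  norm_num at this

lemma glb_subset_infinite {E : Type*} [AddCommGroup E] [Lattice E] {z : ℕ → E} {S' S : Set ℕ}
    (hsub : S' ⊆ S) (hinf : S'.Infinite)
    (hanti : ∀ i ∈ S, ∀ j ∈ S, i ≤ j → z j ≤ z i) (h : IsGLB (z '' S) 0) :
    IsGLB (z '' S') 0 := by
  constructor
  · rintro _ ⟨k, hk, rfl⟩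
    exact h.1 ⟨k, hsub hk, rfl⟩
  · intro c hc
    apply h.2
    rintro _ ⟨k, hk, rfl⟩
    obtain ⟨j, hjS', hkj⟩ := hinf.exists_notMem_finite (Set.finite_Iic k)
    rw [Set.mem_Iic, not_le] at hkj
    exact le_trans (hc ⟨j, hjS', rfl⟩) (hanti k hk j (hsub hjS') hkj.le)

set_option linter.unusedSectionVars false in
theorem stmt11 (p q : ℕ → ℕ) (hpq : DeferredProperty p q) (x y : ℕ → E) (a b : E)
    (hx : DStatOrderConv p q x a) (hy : DStatOrderConv p q y b)
    (hxy : ∀ n, y n ≤ x n) : b ≤ a := by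
  obtain ⟨z, ⟨Kz, hKzinf, hKzd, hzanti, hzglb⟩, K, hKinf, hKd, hzK⟩ := hx
  obtain ⟨w, ⟨Kw, hKwinf, hKwd, hwanti, hwglb⟩, L, hLinf, hLd, hwL⟩ := hy
  set S : Set ℕ := Kz ∩ K ∩ (Kw ∩ L) with hSdef
  have hSd : DeferredDensity p q S 1 :=
    density_inter p q hpq (density_inter p q hpq hKzd hKd) (density_inter p q hpq hKwd hLd)
  have hSinf : S.Infinite := density_one_infinite p q hpq hSd
  have hSKz : S ⊆ Kz := fun k hk => hk.1.1
  have hSKw : S ⊆ Kw := fun k hk => hk.2.1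
  -- key inequality
  have hkey : ∀ k ∈ S, b - a ≤ z k + w k := by
    intro k hk
    calc b - a = (y k - a) + (b - y k) := by abel
      _ ≤ (x k - a) + (b - y k) := add_le_add_left (sub_le_sub_right (hxy k) a) _
      _ ≤ |x k - a| + |y k - b| :=
          add_le_add (le_abs_self _) (by rw [← abs_sub_comm]; exact le_abs_self _)
      _ ≤ z k + w k := add_le_add (hzK k hk.1.2) (hwL k hk.2.2)
  -- b - a ≤ z k for every k ∈ S
  have hlbz : b - a ∈ lowerBounds (z '' S) := by
    rintro _ ⟨k, hk, rfl⟩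
    set T : Set ℕ := S \ Set.Iio k with hTdef
    have hTS : T ⊆ S := Set.diff_subset
    have hTinf : T.Infinite := hSinf.diff (Set.finite_Iio k)
    have hglbT : IsGLB (w '' T) 0 :=
      glb_subset_infinite (hTS.trans hSKw) hTinf hwanti hwglb
    have hlbw : b - a - z k ∈ lowerBounds (w '' T) := by
      rintro _ ⟨j, hj, rfl⟩
      have hkj : k ≤ j := not_lt.mp hj.2
      have hzjk : z j ≤ z k := hzanti k (hSKz hk) j (hSKz (hTS hj)) hkj
      have := hkey j (hTS hj)
      calc b - a - z k ≤ b - a - z j := by exact sub_le_sub_left hzjk _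
        _ ≤ w j := sub_le_iff_le_add.mpr (this.trans_eq (add_comm _ _))
    exact sub_nonpos.mp (hglbT.2 hlbw)
  have hglbS : IsGLB (z '' S) 0 := glb_subset_infinite hSKz hSinf hzanti hzglb
  exact sub_nonpos.mp (hglbS.2 hlbz)
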